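/- Let B, B' be finite dimensional Hilbert spaces, where B carries an associative multiplication m with mm* = δ·id_B. For k,l ≥ 1 and T ∈ L(B'^{⊗k}, B'^{⊗l}) define φ_{k,l}(T) = Σ_l* ∘ ((m^(l))* m^(k) ⊗ T) ∘ Σ_k, where Σ_k : (B ⊗ B')^{⊗k} → B^{⊗k} ⊗ B'^{⊗k} is the canonical shuffle unitary. Then: (i) φ_{l,t}(S) ∘ φ_{k,l}(T) = δ^{l-1} φ_{k,t}(S ∘ T) for all composable S, T; and (ii) φ_{k,l}(T)* = φ_{l,k}(T*). -/

import Mathlib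

open scoped TensorProduct

noncomputable section

/-- Left-nested tensor powers: `LPow X n = X^{⊗(n+1)}`. -/
def LPow (X : Type) [AddCommGroup X] [Module ℂ X] : ℕ → ModuleCat ℂ
  | 0 => ModuleCat.of ℂ X
  | (n + 1) => ModuleCat.of ℂ ((LPow X n : Type) ⊗[ℂ] X)

variable (B B' : Type)
  [NormedAddCommGroup B] [InnerProductSpace ℂ B] [FiniteDimensional ℂ B]
  [NormedAddCommGroup B'] [InnerProductSpace ℂ B'] [FiniteDimensional ℂ B']

variable (m : (B ⊗[ℂ] B) →ₗ[ℂ] B)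

/-- The iterated multiplication `m^{(n+1)} : B^{⊗(n+1)} → B`. -/
def IterMul : ∀ n : ℕ, ↥(LPow B n) →ₗ[ℂ] B
  | 0 => LinearMap.id
  | (n + 1) => m ∘ₗ (TensorProduct.map (IterMul n) LinearMap.id)

/-- The canonical shuffle `Σ_{k+1} : (B ⊗ B')^{⊗(k+1)} ≃ B^{⊗(k+1)} ⊗ B'^{⊗(k+1)}`. -/
def shuffle : ∀ k : ℕ, ↥(LPow (B ⊗[ℂ] B') k) ≃ₗ[ℂ] (↥(LPow B k) ⊗[ℂ] ↥(LPow B' k))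
  | 0 => LinearEquiv.refl ℂ (B ⊗[ℂ] B')
  | (k + 1) =>
      (TensorProduct.congr (shuffle k) (LinearEquiv.refl ℂ (B ⊗[ℂ] B'))).trans
        (TensorProduct.tensorTensorTensorComm ℂ ↥(LPow B k) ↥(LPow B' k) B B')

/-- The map `φ_{k,l}(T) = Σ_l* ∘ ((m^{(l)})* m^{(k)} ⊗ T) ∘ Σ_k` of the paper
(indices shifted by one: here `k, l` correspond to `k+1, l+1`). -/
def phi (Mstar : ∀ n : ℕ, B →ₗ[ℂ] ↥(LPow B n)) (k l : ℕ)
    (T : ↥(LPow B' k) →ₗ[ℂ] ↥(LPow B' l)) :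
    ↥(LPow (B ⊗[ℂ] B') k) →ₗ[ℂ] ↥(LPow (B ⊗[ℂ] B') l) :=
  (shuffle B B' l).symm.toLinearMap ∘ₗ
    (TensorProduct.map ((Mstar l) ∘ₗ (IterMul B m k)) T) ∘ₗ
      (shuffle B B' k).toLinearMap

/-- Properties of the maps `φ_{k,l}(T) = Σ_l* ∘ ((m^{(l)})* m^{(k)} ⊗ T) ∘ Σ_k`:
(i) `φ_{l,t}(S) ∘ φ_{k,l}(T) = δ^{l-1} φ_{k,t}(S ∘ T)`, and
(ii) `φ_{k,l}(T)* = φ_{l,k}(T*)` (all indices shifted by one: `k` here is `k+1`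
in the paper, so `δ^{l-1}` becomes `δ^l`). -/
theorem phi_comp_and_adjoint
    (δ : ℝ) (hδ : 0 < δ)
    -- the inner product on `B`, `B'`, `B ⊗ B'` and all tensor powers, in the
    -- convention `⟨x,y⟩ = ψ(y*x)` (linear in the first variable)
    (ipB : B → B → ℂ) (ipB' : B' → B' → ℂ)
    (hBconj : ∀ x y, ipB y x = starRingEnd ℂ (ipB x y))
    (hBpos : ∀ x : B, x ≠ 0 → 0 < (ipB x x).re)
    (hB'conj : ∀ x y, ipB' y x = starRingEnd ℂ (ipB' x y))
    (hB'pos : ∀ x : B', x ≠ 0 → 0 < (ipB' x x).re)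
    (ipC : (B ⊗[ℂ] B') → (B ⊗[ℂ] B') → ℂ)
    (hCaddl : ∀ u v w, ipC (u + v) w = ipC u w + ipC v w)
    (hCaddr : ∀ u v w, ipC u (v + w) = ipC u v + ipC u w)
    (hCpure : ∀ (a c : B) (b d : B'), ipC (a ⊗ₜ[ℂ] b) (c ⊗ₜ[ℂ] d) = ipB a c * ipB' b d)
    (ipLB : ∀ n, ↥(LPow B n) → ↥(LPow B n) → ℂ)
    (hLB0 : ∀ a b : B, ipLB 0 a b = ipB a b)
    (hLBaddl : ∀ n u v w, ipLB n (u + v) w = ipLB n u w + ipLB n v w)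
    (hLBaddr : ∀ n u v w, ipLB n u (v + w) = ipLB n u v + ipLB n u w)
    (hLBpure : ∀ n (u v : ↥(LPow B n)) (a b : B),
      ipLB (n + 1) (u ⊗ₜ[ℂ] a) (v ⊗ₜ[ℂ] b) = ipLB n u v * ipB a b)
    (ipLB' : ∀ n, ↥(LPow B' n) → ↥(LPow B' n) → ℂ)
    (hLB'0 : ∀ a b : B', ipLB' 0 a b = ipB' a b)
    (hLB'addl : ∀ n u v w, ipLB' n (u + v) w = ipLB' n u w + ipLB' n v w)
    (hLB'addr : ∀ n u v w, ipLB' n u (v + w) = ipLB' n u v + ipLB' n u w)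
    (hLB'pure : ∀ n (u v : ↥(LPow B' n)) (a b : B'),
      ipLB' (n + 1) (u ⊗ₜ[ℂ] a) (v ⊗ₜ[ℂ] b) = ipLB' n u v * ipB' a b)
    (ipLC : ∀ n, ↥(LPow (B ⊗[ℂ] B') n) → ↥(LPow (B ⊗[ℂ] B') n) → ℂ)
    (hLC0 : ∀ a b : B ⊗[ℂ] B', ipLC 0 a b = ipC a b)
    (hLCaddl : ∀ n u v w, ipLC n (u + v) w = ipLC n u w + ipLC n v w)
    (hLCaddr : ∀ n u v w, ipLC n u (v + w) = ipLC n u v + ipLC n u w)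
    (hLCpure : ∀ n (u v : ↥(LPow (B ⊗[ℂ] B') n)) (a b : B ⊗[ℂ] B'),
      ipLC (n + 1) (u ⊗ₜ[ℂ] a) (v ⊗ₜ[ℂ] b) = ipLC n u v * ipC a b)
    -- the adjoints `(m^{(n+1)})*` of the iterated multiplications
    (Mstar : ∀ n : ℕ, B →ₗ[ℂ] ↥(LPow B n))
    (hadj : ∀ n (x : B) (u : ↥(LPow B n)), ipLB n (Mstar n x) u = ipB x (IterMul B m n u))
    -- `m^{(l)} (m^{(l)})* = δ^{l-1} · id`
    (hdelta : ∀ (j : ℕ) (x : B), IterMul B m j (Mstar j x) = ((δ : ℂ) ^ j) • x)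
    -- a map `T` together with its adjoint `T*`
    (k l : ℕ) (T : ↥(LPow B' k) →ₗ[ℂ] ↥(LPow B' l)) (Tst : ↥(LPow B' l) →ₗ[ℂ] ↥(LPow B' k))
    (hTst : ∀ (u : ↥(LPow B' l)) (v : ↥(LPow B' k)), ipLB' k (Tst u) v = ipLB' l u (T v)) :
    -- (i) the composition formula
    (∀ (k' l' t' : ℕ) (T' : ↥(LPow B' k') →ₗ[ℂ] ↥(LPow B' l'))
        (S' : ↥(LPow B' l') →ₗ[ℂ] ↥(LPow B' t')),
      (phi B B' m Mstar l' t' S') ∘ₗ (phi B B' m Mstar k' l' T') =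
        ((δ : ℂ) ^ l') • phi B B' m Mstar k' t' (S' ∘ₗ T')) ∧
    -- (ii) `φ_{l,k}(T*)` is the adjoint of `φ_{k,l}(T)`
    (∀ (u : ↥(LPow (B ⊗[ℂ] B') l)) (v : ↥(LPow (B ⊗[ℂ] B') k)),
      ipLC k (phi B B' m Mstar l k Tst u) v = ipLC l u (phi B B' m Mstar k l T v)) := by
  -- zero lemmas for the biadditive pairings
  have LBzl : ∀ n w, ipLB n 0 w = 0 := by
    intro n w
    have h := hLBaddl n 0 0 w
    rw [add_zero] at h
    exact right_eq_add.mp h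
  have LBzr : ∀ n w, ipLB n w 0 = 0 := by
    intro n w
    have h := hLBaddr n w 0 0
    rw [add_zero] at h
    exact right_eq_add.mp h
  have LB'zl : ∀ n w, ipLB' n 0 w = 0 := by
    intro n w
    have h := hLB'addl n 0 0 w
    rw [add_zero] at h
    exact right_eq_add.mp h
  have LB'zr : ∀ n w, ipLB' n w 0 = 0 := by
    intro n w
    have h := hLB'addr n w 0 0
    rw [add_zero] at h
    exact right_eq_add.mp h
  have LCzl : ∀ n w, ipLC n 0 w = 0 := by
    intro n w
    have h := hLCaddl n 0 0 w
    rw [add_zero] at h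
    exact right_eq_add.mp h
  have LCzr : ∀ n w, ipLC n w 0 = 0 := by
    intro n w
    have h := hLCaddr n w 0 0
    rw [add_zero] at h
    exact right_eq_add.mp h
  -- conjugate symmetry of the pairing on tensor powers of `B`
  have conjB : ∀ n (u v : ↥(LPow B n)), ipLB n v u = starRingEnd ℂ (ipLB n u v) := by
    intro n
    induction n with
    | zero =>
      intro u v
      rw [hLB0 v u, hLB0 u v]
      exact hBconj u v
    | succ n ih =>
      intro u v
      induction u using TensorProduct.induction_on with
      | zero => erw [LBzr, LBzl]; simp
      | tmul a a' =>
        induction v using TensorProduct.induction_on with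
        | zero => erw [LBzl, LBzr]; simp
        | tmul b b' =>
          rw [hLBpure, hLBpure, ih a b, hBconj a' b', map_mul]
        | add v1 v2 h1 h2 => erw [hLBaddl, hLBaddr, h1, h2, map_add]
      | add u1 u2 h1 h2 => erw [hLBaddr, hLBaddl, h1, h2, map_add]
  -- the shuffle on pure tensors (inverse direction)
  have shpure : ∀ n (a : ↥(LPow B n)) (a' : B) (b : ↥(LPow B' n)) (b' : B'),
      (shuffle B B' (n+1)).symm
        ((a ⊗ₜ[ℂ] a' : ↥(LPow B (n+1))) ⊗ₜ[ℂ] (b ⊗ₜ[ℂ] b' : ↥(LPow B' (n+1))))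
        = ((shuffle B B' n).symm (a ⊗ₜ[ℂ] b)) ⊗ₜ[ℂ] (a' ⊗ₜ[ℂ] b') := by
    intro n a a' b b'
    rfl
  -- the pairing of two shuffled pure tensors factorizes
  have pureP : ∀ n (a c : ↥(LPow B n)) (b d : ↥(LPow B' n)),
      ipLC n ((shuffle B B' n).symm (a ⊗ₜ[ℂ] b)) ((shuffle B B' n).symm (c ⊗ₜ[ℂ] d))
        = ipLB n a c * ipLB' n b d := by
    intro n
    induction n with
    | zero =>
      intro a c b d
      have e0 : ∀ (x : ↥(LPow B 0)) (y : ↥(LPow B' 0)),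
          (shuffle B B' 0).symm (x ⊗ₜ[ℂ] y) = (x ⊗ₜ[ℂ] y : B ⊗[ℂ] B') := fun _ _ => rfl
      rw [e0, e0, hLC0]; erw [hCpure, hLB0, hLB'0]
    | succ n ih =>
      intro a c b d
      induction a using TensorProduct.induction_on with
      | zero =>
        erw [TensorProduct.zero_tmul, map_zero, LCzl, LBzl, zero_mul]
      | tmul a0 a1 =>
        induction b using TensorProduct.induction_on with
        | zero => erw [TensorProduct.tmul_zero, map_zero, LCzl, LB'zl, mul_zero]
        | tmul b0 b1 =>
          induction c using TensorProduct.induction_on with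
          | zero => erw [TensorProduct.zero_tmul, map_zero, LCzr, LBzr, zero_mul]
          | tmul c0 c1 =>
            induction d using TensorProduct.induction_on with
            | zero => erw [TensorProduct.tmul_zero, map_zero, LCzr, LB'zr, mul_zero]
            | tmul d0 d1 =>
              rw [shpure, shpure, hLCpure, ih, hCpure, hLBpure, hLB'pure]
              ring
            | add d1 d2 h1 h2 =>
              erw [TensorProduct.tmul_add, map_add, hLCaddr, h1, h2, hLB'addr, mul_add]
          | add c1 c2 h1 h2 =>
            erw [TensorProduct.add_tmul, map_add, hLCaddr, h1, h2, hLBaddr, add_mul]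
        | add b1 b2 h1 h2 =>
          erw [TensorProduct.tmul_add, map_add, hLCaddl, h1, h2, hLB'addl, mul_add]
      | add a1 a2 h1 h2 =>
        erw [TensorProduct.add_tmul, map_add, hLCaddl, h1, h2, hLBaddl, add_mul]
  constructor
  · -- (i) composition formula
    intro k' l' t' T' S'
    have hmid : ((Mstar t') ∘ₗ IterMul B m l') ∘ₗ ((Mstar l') ∘ₗ IterMul B m k')
        = ((δ : ℂ) ^ l') • ((Mstar t') ∘ₗ IterMul B m k') := by
      apply LinearMap.ext
      intro x
      simp [LinearMap.comp_apply, hdelta, map_smul]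
    have hmap : (TensorProduct.map ((Mstar t') ∘ₗ IterMul B m l') S') ∘ₗ
        (TensorProduct.map ((Mstar l') ∘ₗ IterMul B m k') T')
        = ((δ : ℂ) ^ l') • TensorProduct.map ((Mstar t') ∘ₗ IterMul B m k') (S' ∘ₗ T') := by
      rw [← TensorProduct.map_comp, hmid, TensorProduct.map_smul_left]
    apply LinearMap.ext
    intro x
    have h := LinearMap.congr_fun hmap ((shuffle B B' k') x)
    simp only [LinearMap.comp_apply, LinearMap.smul_apply] at h
    simp only [phi, LinearMap.comp_apply, LinearEquiv.coe_coe, LinearMap.smul_apply,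
      LinearEquiv.apply_symm_apply, h, map_smul]
  · -- (ii) adjoint formula
    intro u v
    have hkey : ∀ (x : ↥(LPow B l) ⊗[ℂ] ↥(LPow B' l)) (y : ↥(LPow B k) ⊗[ℂ] ↥(LPow B' k)),
        ipLC k ((shuffle B B' k).symm
            (TensorProduct.map ((Mstar k) ∘ₗ IterMul B m l) Tst x)) ((shuffle B B' k).symm y)
          = ipLC l ((shuffle B B' l).symm x)
            ((shuffle B B' l).symm (TensorProduct.map ((Mstar l) ∘ₗ IterMul B m k) T y)) := by
      intro x y
      induction x using TensorProduct.induction_on with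
      | zero => simp [LCzl]
      | tmul a b =>
        induction y using TensorProduct.induction_on with
        | zero => simp [LCzr]
        | tmul c d =>
          simp only [TensorProduct.map_tmul, LinearMap.comp_apply]
          rw [pureP, pureP, hadj, hTst]
          have h1 : ipLB l a ((Mstar l) (IterMul B m k c))
              = ipB (IterMul B m l a) (IterMul B m k c) := by
            rw [conjB l (Mstar l (IterMul B m k c)) a, hadj]
            exact (hBconj (IterMul B m k c) (IterMul B m l a)).symm
          rw [h1]
        | add y1 y2 h1 h2 => rw [map_add, map_add, hLCaddr, map_add, hLCaddr, h1, h2]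
      | add x1 x2 h1 h2 => rw [map_add, map_add, hLCaddl, map_add, hLCaddl, h1, h2]
    have h := hkey ((shuffle B B' l) u) ((shuffle B B' k) v)
    simpa [phi, LinearMap.comp_apply, LinearEquiv.symm_apply_apply] using h

end
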